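/- Fix ε ∈ {1,−1} and suppose y : ℤ≥0² → F satisfies the frieze recurrence y_{i,j} y_{i−1,j−1} = ε y_{i,j−1} y_{i−1,j} + β for i,j ≥ 1, with initial entries y_{a,b} (a = 0 or b = 0) independent indeterminates over ℤ[β]. Then every y_{i,j} is a Laurent polynomial in the initial entries with coefficients in ℤ[β]. -/

import Mathlib

open MvPolynomial

/-- Index set for the initial cluster of the frieze recurrence:
boundary pairs (a,b) ∈ ℤ≥0² with a = 0 or b = 0. -/
def FriezeInit : Type := {p : ℕ × ℕ // p.1 = 0 ∨ p.2 = 0}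

def fCol (i : ℕ) : FriezeInit := ⟨(i, 0), Or.inr rfl⟩
def fRow (j : ℕ) : FriezeInit := ⟨(0, j), Or.inl rfl⟩
lemma fCol_zero : fCol 0 = fRow 0 := rfl
noncomputable section
abbrev KK : Type := MvPolynomial (FriezeInit ⊕ Unit) ℤ
def Df : ℕ → ℕ → KK
  | _, 0 => 1
  | 0, _ + 1 => 1
  | i + 1, 1 => X (Sum.inl (fCol i)) * Df i 1
  | i + 1, j + 2 => X (Sum.inl (fRow (j + 1))) * Df (i + 1) (j + 1) * Df (i + 1) j
  termination_by i j => (i, j)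
def Nf (ε : ℤ) : ℕ → ℕ → KK
  | i, 0 => X (Sum.inl (fCol i))
  | 0, j + 1 => X (Sum.inl (fRow (j + 1)))
  | i + 1, 1 =>
      (ε : KK) * (X (Sum.inl (fCol (i + 1))) * Nf ε i 1) + X (Sum.inr ()) * Df i 1
  | i + 1, j + 2 =>
      (ε : KK) ^ (i + 2) *
          (((ε : KK) * X (Sum.inl (fRow (j + 2))) + X (Sum.inl (fRow j))) *
            Nf ε (i + 1) (j + 1) * Df (i + 1) j)
        - (ε : KK) * (X (Sum.inl (fRow (j + 1))) * Nf ε (i + 1) j * Df (i + 1) (j + 1))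
  termination_by i j => (i, j)

noncomputable def Yf (ε : ℤ) {F : Type*} [Field F] (x : FriezeInit ⊕ Unit → F) (β : F) :
    ℕ → ℕ → F
  | i, 0 => x (Sum.inl (fCol i))
  | 0, j + 1 => x (Sum.inl (fRow (j + 1)))
  | i + 1, 1 =>
      ((ε : F) * (x (Sum.inl (fCol (i + 1))) * Yf ε x β i 1) + β) / x (Sum.inl (fCol i))
  | i + 1, j + 2 =>
      (ε : F) ^ (i + 2) *
          (((ε : F) * x (Sum.inl (fRow (j + 2))) + x (Sum.inl (fRow j))) /
            x (Sum.inl (fRow (j + 1)))) * Yf ε x β (i + 1) (j + 1)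
        - (ε : F) * Yf ε x β (i + 1) j
  termination_by i j => (i, j)

def phiK : KK →+* KK :=
  (aeval (fun s : FriezeInit ⊕ Unit => Sum.elim (fun t => (X (Sum.inl t) : KK)) (fun _ => 0) s) :
    KK →ₐ[ℤ] KK).toRingHom
@[simp] lemma phiK_Xl (s : FriezeInit) : phiK (X (Sum.inl s)) = X (Sum.inl s) := by
  simp [phiK]
@[simp] lemma phiK_Xr : phiK (X (Sum.inr ())) = 0 := by simp [phiK]

lemma Df_ne_zero : ∀ i j, Df i j ≠ 0 := by
  intro i j
  induction i, j using Df.induct with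
  | case1 => simp [Df]
  | case2 => simp [Df]
  | case3 i ih => rw [Df]; exact mul_ne_zero (X_ne_zero _) ih
  | case4 i j ih1 ih2 => rw [Df]; exact mul_ne_zero (mul_ne_zero (X_ne_zero _) ih1) ih2

lemma phiK_Df : ∀ i j, phiK (Df i j) = Df i j := by
  intro i j
  induction i, j using Df.induct with
  | case1 => simp [Df]
  | case2 => simp [Df]
  | case3 i ih => rw [Df]; simp [ih]
  | case4 i j ih1 ih2 => rw [Df]; simp [ih1, ih2]

section withEps
variable {ε : ℤ}

lemma eps_sq (hε : ε = 1 ∨ ε = -1) : (ε : KK) * (ε : KK) = 1 := by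
  rcases hε with h | h <;> subst h <;> norm_num

lemma eps_pow_sq (hε : ε = 1 ∨ ε = -1) (n : ℕ) : (ε : KK) ^ n * (ε : KK) ^ n = 1 := by
  rw [← mul_pow, eps_sq hε, one_pow]

lemma phiK_Nf (hε : ε = 1 ∨ ε = -1) : ∀ i j, X (Sum.inl (fRow 0)) * phiK (Nf ε i j) =
    (ε : KK) ^ (i * j) * (X (Sum.inl (fCol i)) * X (Sum.inl (fRow j)) * Df i j) := by
  intro i j
  induction i, j using Nf.induct with
  | case1 i => rw [Nf]; simp [Df, fCol_zero]; ring
  | case2 j => rw [Nf]; simp [Df, ← fCol_zero]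
  | case3 i ih =>
      rw [Nf, Df]
      simp only [Nat.succ_eq_add_one, map_add, map_mul, map_intCast, phiK_Xl, phiK_Xr, phiK_Df, zero_mul, mul_zero,
        add_zero]
      linear_combination ((ε : KK) * X (Sum.inl (fCol (i+1)))) * ih
  | case4 i j ih1 ih2 =>
      rw [Nf, Df]
      simp only [Nat.succ_eq_add_one, map_sub, map_add, map_mul, map_pow, map_intCast, phiK_Xl, phiK_Df]
      linear_combination
        ((ε : KK) ^ (i + 2) * ((ε : KK) * X (Sum.inl (fRow (j+2))) + X (Sum.inl (fRow j))) *
            Df (i+1) j) * ih1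
        - ((ε : KK) * X (Sum.inl (fRow (j+1))) * Df (i+1) (j+1)) * ih2
        + ((ε : KK) ^ ((i+1)*j + 2*i + 2) * (X (Sum.inl (fRow (j+2))) *
            (X (Sum.inl (fCol (i+1))) * X (Sum.inl (fRow (j+1))) * Df (i+1) (j+1) * Df (i+1) j))) *
            eps_sq hε
        + ((ε : KK) ^ ((i+1)*j + 1) * (X (Sum.inl (fRow j)) *
            (X (Sum.inl (fCol (i+1))) * X (Sum.inl (fRow (j+1))) * Df (i+1) (j+1) * Df (i+1) j))) *
            eps_pow_sq hε (i + 1)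


lemma Nf_ne_zero (hε : ε = 1 ∨ ε = -1) (i j : ℕ) : Nf ε i j ≠ 0 := by
  intro h
  have h0 := phiK_Nf hε i j
  rw [h, map_zero, mul_zero] at h0
  have hne : ((ε : KK) ^ (i * j)) * (X (Sum.inl (fCol i)) * X (Sum.inl (fRow j)) * Df i j) ≠ 0 := by
    have hε0 : (ε : KK) ≠ 0 := by
      rcases hε with h | h <;> subst h <;> norm_num
    exact mul_ne_zero (pow_ne_zero _ hε0)
      (mul_ne_zero (mul_ne_zero (X_ne_zero _) (X_ne_zero _)) (Df_ne_zero i j))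
  exact hne h0.symm

end withEps

section FF
variable {ε : ℤ} {F : Type*} [Field F] [Algebra KK F] [IsFractionRing KK F]
variable {x : FriezeInit ⊕ Unit → F} {β : F}

lemma Yf_col0 (i : ℕ) : Yf ε x β i 0 = x (Sum.inl (fCol i)) := by simp [Yf]

lemma Yf_row0 (j : ℕ) : Yf ε x β 0 j = x (Sum.inl (fRow j)) := by
  cases j with
  | zero => rw [Yf_col0, fCol_zero]
  | succ j => simp [Yf]

lemma Yf_c1 (i : ℕ) : Yf ε x β (i+1) 1 =
    ((ε : F) * (x (Sum.inl (fCol (i + 1))) * Yf ε x β i 1) + β) / x (Sum.inl (fCol i)) := by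
  rw [Yf]

lemma Yf_c2 (i j : ℕ) : Yf ε x β (i+1) (j+2) =
    (ε : F) ^ (i + 2) *
        (((ε : F) * x (Sum.inl (fRow (j + 2))) + x (Sum.inl (fRow j))) /
          x (Sum.inl (fRow (j + 1)))) * Yf ε x β (i + 1) (j + 1)
      - (ε : F) * Yf ε x β (i + 1) j := by
  rw [Yf]

set_option linter.unusedSectionVars false

lemma x_ne_zero (hx : ∀ s, x s = algebraMap KK F (X s)) (s : FriezeInit) :
    x (Sum.inl s) ≠ 0 := by
  rw [hx]
  exact (map_ne_zero_iff _ (IsFractionRing.injective KK F)).mpr (X_ne_zero _)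

lemma aDf_ne_zero (i j : ℕ) : algebraMap KK F (Df i j) ≠ 0 :=
  (map_ne_zero_iff _ (IsFractionRing.injective KK F)).mpr (Df_ne_zero i j)

lemma Yf_eq_ND (hx : ∀ s, x s = algebraMap KK F (X s))
    (hβ : β = algebraMap KK F (X (Sum.inr ()))) (i j : ℕ) :
    Yf ε x β i j = algebraMap KK F (Nf ε i j) / algebraMap KK F (Df i j) := by
  induction i, j using Nf.induct with
  | case1 i => rw [Yf_col0, Nf, Df, hx]; simp
  | case2 j => rw [Yf_row0, Nf, Df, hx]; simp
  | case3 i ih =>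
      rw [Yf_c1, ih, Nf, Df]
      have hb2 : x (Sum.inr ()) = β := by rw [hβ, hx]
      simp only [map_add, map_mul, map_intCast, ← hx, hb2]
      have h1 := x_ne_zero hx (fCol i)
      have h2 : algebraMap KK F (Df i 1) ≠ 0 := aDf_ne_zero i 1
      rw [div_eq_div_iff h1 (mul_ne_zero h1 h2)]
      field_simp
  | case4 i j ih1 ih2 =>
      rw [Yf_c2, ih1, ih2, Nf, Df]
      simp only [map_sub, map_add, map_mul, map_pow, map_intCast, ← hx]
      have h1 := x_ne_zero hx (fRow (j+1))
      have h2 : algebraMap KK F (Df (i+1) (j+1)) ≠ 0 := aDf_ne_zero _ _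
      have h3 : algebraMap KK F (Df (i+1) j) ≠ 0 := aDf_ne_zero _ _
      field_simp

lemma Yf_ne_zero (hε : ε = 1 ∨ ε = -1) (hx : ∀ s, x s = algebraMap KK F (X s))
    (hβ : β = algebraMap KK F (X (Sum.inr ()))) (i j : ℕ) :
    Yf ε x β i j ≠ 0 := by
  rw [Yf_eq_ND hx hβ]
  exact div_ne_zero
    ((map_ne_zero_iff _ (IsFractionRing.injective KK F)).mpr (Nf_ne_zero hε i j))
    (aDf_ne_zero i j)

lemma eps_sq_F (hε : ε = 1 ∨ ε = -1) : (ε : F) * (ε : F) = 1 := by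
  rcases hε with h | h <;> subst h <;> norm_num

lemma Yf_L1 (hε : ε = 1 ∨ ε = -1) (hx : ∀ s, x s = algebraMap KK F (X s)) (i j : ℕ) :
    Yf ε x β i (j+2) =
      (ε : F) ^ (i + 1) *
          (((ε : F) * x (Sum.inl (fRow (j + 2))) + x (Sum.inl (fRow j))) /
            x (Sum.inl (fRow (j + 1)))) * Yf ε x β i (j + 1)
        - (ε : F) * Yf ε x β i j := by
  cases i with
  | succ i => rw [Yf_c2]
  | zero =>
      rw [Yf_row0, Yf_row0, Yf_row0, pow_one]
      have h1 := x_ne_zero hx (fRow (j+1))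
      field_simp
      linear_combination (-(x (Sum.inl (fRow (j+2))))) * eps_sq_F (F := F) hε

lemma Yf_rec (hε : ε = 1 ∨ ε = -1) (hx : ∀ s, x s = algebraMap KK F (X s)) (i j : ℕ) :
    Yf ε x β (i+1) (j+1) * Yf ε x β i j =
      (ε : F) * (Yf ε x β (i+1) j * Yf ε x β i (j+1)) + β := by
  induction j with
  | zero =>
      rw [Yf_c1, Yf_col0, Yf_col0 (i+1)]
      exact div_mul_cancel₀ _ (x_ne_zero (x := x) hx (fCol i))
  | succ j ih =>
      rw [Yf_L1 hε hx (i+1) j, Yf_L1 hε hx i j]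
      linear_combination ih + (Yf ε x β (i+1) (j+1) * Yf ε x β i j) * eps_sq_F (F := F) hε

lemma Yf_mem (i j : ℕ) : Yf ε x β i j ∈ Algebra.adjoin ℤ
    (Set.range (fun s : FriezeInit => x (Sum.inl s)) ∪
     Set.range (fun s : FriezeInit => (x (Sum.inl s))⁻¹) ∪ {β}) := by
  set S := (Set.range (fun s : FriezeInit => x (Sum.inl s)) ∪
     Set.range (fun s : FriezeInit => (x (Sum.inl s))⁻¹) ∪ {β} : Set F) with hS
  have hxm : ∀ s : FriezeInit, x (Sum.inl s) ∈ Algebra.adjoin ℤ S :=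
    fun s => Algebra.subset_adjoin (Or.inl (Or.inl ⟨s, rfl⟩))
  have hxi : ∀ s : FriezeInit, (x (Sum.inl s))⁻¹ ∈ Algebra.adjoin ℤ S :=
    fun s => Algebra.subset_adjoin (Or.inl (Or.inr ⟨s, rfl⟩))
  have hβm : β ∈ Algebra.adjoin ℤ S := Algebra.subset_adjoin (Or.inr rfl)
  have hεm : (ε : F) ∈ Algebra.adjoin ℤ S := intCast_mem _ ε
  induction i, j using Nf.induct with
  | case1 i => rw [Yf_col0]; exact hxm _
  | case2 j => rw [Yf_row0]; exact hxm _
  | case3 i ih =>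
      rw [Yf_c1, div_eq_mul_inv]
      exact mul_mem (add_mem (mul_mem hεm (mul_mem (hxm _) ih)) hβm) (hxi _)
  | case4 i j ih1 ih2 =>
      rw [Yf_c2, div_eq_mul_inv]
      exact sub_mem
        (mul_mem (mul_mem (pow_mem hεm _)
          (mul_mem (add_mem (mul_mem hεm (hxm _)) (hxm _)) (hxi _))) ih1)
        (mul_mem hεm ih2)

end FF
end

/-- The generalized frieze pattern recurrence
y_{i,j} y_{i−1,j−1} = ε y_{i,j−1} y_{i−1,j} + β, with ε ∈ {1,−1},
exhibits the Laurent phenomenon over ℤ[β]. -/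
theorem frieze_recurrence_laurent
    (ε : ℤ) (hε : ε = 1 ∨ ε = -1)
    (F : Type*) [Field F] [Algebra (MvPolynomial (FriezeInit ⊕ Unit) ℤ) F]
    [IsFractionRing (MvPolynomial (FriezeInit ⊕ Unit) ℤ) F]
    (x : FriezeInit ⊕ Unit → F)
    (hx : ∀ s, x s = algebraMap (MvPolynomial (FriezeInit ⊕ Unit) ℤ) F (X s))
    (β : F) (hβ : β = x (Sum.inr ()))
    (y : ℕ → ℕ → F)
    (hinit : ∀ a b : ℕ, ∀ h : a = 0 ∨ b = 0, y a b = x (Sum.inl ⟨(a, b), h⟩))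
    (hrec : ∀ i j : ℕ,
      y (i + 1) (j + 1) * y i j = (ε : F) * (y (i + 1) j * y i (j + 1)) + β) :
    ∀ i j : ℕ, y i j ∈ Algebra.adjoin ℤ
      (Set.range (fun s : FriezeInit => x (Sum.inl s)) ∪
       Set.range (fun s : FriezeInit => (x (Sum.inl s))⁻¹) ∪ {β}) := by
  have hβ' : β = algebraMap KK F (X (Sum.inr ())) := by rw [hβ, hx]
  have hyY : ∀ i j, y i j = Yf ε x β i j := by
    intro i
    induction i with
    | zero => intro j; rw [Yf_row0]; exact hinit 0 j (Or.inl rfl)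
    | succ i ihi =>
        intro j
        induction j with
        | zero => rw [Yf_col0]; exact hinit (i+1) 0 (Or.inr rfl)
        | succ j ihj =>
            have h := hrec i j
            rw [ihi j, ihi (j+1), ihj] at h
            have h2 := Yf_rec (β := β) hε hx i j
            exact mul_right_cancel₀ (Yf_ne_zero hε hx hβ' i j) (h.trans h2.symm)
  intro i j
  rw [hyY i j]
  exact Yf_mem i j
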